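/- Graded Nakayama lemma: let the grading on P given by W be weakly positive, i.e. assume there exists a ∈ ℤ^m such that every entry of aᵀ·W is strictly positive. Fix shifts δ_1,…,δ_r ∈ ℤ^m and let M ⊆ P^r be a finitely generated graded submodule, i.e. M is generated by finitely many homogeneous vectors. Let v_1,…,v_s ∈ M be homogeneous vectors and let 𝔪 = (x_1,…,x_n) be the ideal generated by the variables. Then v_1,…,v_s generate M as a P-module if and only if M ⊆ Span_P(v_1,…,v_s) + 𝔪·M (equivalently, if and only if the residue classes of v_1,…,v_s generate the K-vector space M/𝔪M). -/

import Mathlib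

open MvPolynomial

/-- The `W`-degree of an exponent vector `α ∈ ℕ^n`: `W·α = ∑ⱼ αⱼ w⁽ʲ⁾ ∈ ℤ^m`. -/
def wdeg {m n : ℕ} (W : Matrix (Fin m) (Fin n) ℤ) (α : Fin n →₀ ℕ) : Fin m → ℤ :=
  fun i => ∑ j, (α j : ℤ) * W i j

/-- A polynomial is `W`-homogeneous of degree `d ∈ ℤ^m` if every monomial in its support
has `W`-degree `d`. -/
def IsWHomogeneous {K : Type*} [CommSemiring K] {m n : ℕ} (W : Matrix (Fin m) (Fin n) ℤ)
    (p : MvPolynomial (Fin n) K) (d : Fin m → ℤ) : Prop :=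
  ∀ α ∈ p.support, wdeg W α = d

/-- A vector `v ∈ P^r` is homogeneous of degree `d ∈ ℤ^m` (with respect to the shifts `δ`)
if each component `v i` is `W`-homogeneous of degree `d - δ i`. -/
def IsWHomogeneousVec {K : Type*} [CommSemiring K] {m n r : ℕ} (W : Matrix (Fin m) (Fin n) ℤ)
    (δ : Fin r → Fin m → ℤ) (v : Fin r → MvPolynomial (Fin n) K) (d : Fin m → ℤ) : Prop :=
  ∀ i : Fin r, ∀ α ∈ (v i).support, wdeg W α = d - δ i

section Aux

variable {K : Type*} [Field K] {m n r : ℕ} {W : Matrix (Fin m) (Fin n) ℤ}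
  {δ : Fin r → Fin m → ℤ}

/-- columns of W -/
def wcol (W : Matrix (Fin m) (Fin n) ℤ) : Fin n → Fin m → ℤ := fun j i => W i j

lemma weight_eq_wdeg (α : Fin n →₀ ℕ) :
    (Finsupp.weight (wcol W)) α = wdeg W α := by
  funext i
  rw [Finsupp.weight_apply, Finsupp.sum]
  rw [show ((∑ j ∈ α.support, α j • wcol W j) i) = ∑ j ∈ α.support, (α j : ℤ) * W i j from by
    rw [Finset.sum_apply]; exact Finset.sum_congr rfl fun j _ => by simp [wcol, nsmul_eq_mul]]
  rw [wdeg]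
  exact Finset.sum_subset (Finset.subset_univ _) (fun j _ hj => by
    simp [Finsupp.notMem_support_iff.mp hj])

lemma wdeg_add (β γ : Fin n →₀ ℕ) : wdeg W (β + γ) = wdeg W β + wdeg W γ := by
  funext i
  simp only [wdeg, Finsupp.coe_add, Pi.add_apply]
  rw [← Finset.sum_add_distrib]
  apply Finset.sum_congr rfl
  intro j _
  push_cast
  ring

end Aux

section Aux2

variable {K : Type*} [Field K] {m n r : ℕ} {W : Matrix (Fin m) (Fin n) ℤ}
  {δ : Fin r → Fin m → ℤ}

noncomputable def whcW (W : Matrix (Fin m) (Fin n) ℤ) (d : Fin m → ℤ) :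
    MvPolynomial (Fin n) K →ₗ[K] MvPolynomial (Fin n) K :=
  weightedHomogeneousComponent (wcol W) d

lemma coeff_whcW (d : Fin m → ℤ) (p : MvPolynomial (Fin n) K) (α : Fin n →₀ ℕ) :
    coeff α (whcW W d p) = if wdeg W α = d then coeff α p else 0 := by
  classical
  rw [whcW, coeff_weightedHomogeneousComponent]
  simp [weight_eq_wdeg]

lemma whcW_mul_homog {q : MvPolynomial (Fin n) K} {b : Fin m → ℤ}
    (hq : IsWHomogeneous W q b) (p : MvPolynomial (Fin n) K) (c : Fin m → ℤ) :
    whcW W c (p * q) = whcW W (c - b) p * q := by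
  ext α
  rw [coeff_whcW, coeff_mul, coeff_mul]
  simp only [coeff_whcW]
  split_ifs with h
  · refine Finset.sum_congr rfl fun x hx => ?_
    rw [Finset.HasAntidiagonal.mem_antidiagonal] at hx
    split_ifs with h2
    · rfl
    · by_cases hγ : coeff x.2 q = 0
      · rw [hγ, mul_zero, mul_zero]
      · exact absurd (by rw [← h, ← hx, wdeg_add, hq x.2 (mem_support_iff.mpr hγ)]; abel)
          h2
  · symm
    refine Finset.sum_eq_zero fun x hx => ?_
    rw [Finset.HasAntidiagonal.mem_antidiagonal] at hx
    split_ifs with h2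
    · by_cases hγ : coeff x.2 q = 0
      · rw [hγ, mul_zero]
      · exact absurd (by rw [← hx, wdeg_add, h2, hq x.2 (mem_support_iff.mpr hγ)]; abel) h
    · exact zero_mul _

lemma whcW_eq_self {p : MvPolynomial (Fin n) K} {d : Fin m → ℤ}
    (hp : IsWHomogeneous W p d) : whcW W d p = p := by
  ext α
  rw [coeff_whcW]
  split_ifs with h
  · rfl
  · by_contra hc
    exact h (hp α (mem_support_iff.mpr fun h0 => hc h0.symm))

lemma isWHomogeneous_whcW (d : Fin m → ℤ) (p : MvPolynomial (Fin n) K) :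
    IsWHomogeneous W (whcW W d p) d := by
  intro α hα
  rw [mem_support_iff, coeff_whcW] at hα
  by_contra h
  rw [if_neg h] at hα
  exact hα rfl

end Aux2

section Aux3

variable {K : Type*} [Field K] {m n r : ℕ} {W : Matrix (Fin m) (Fin n) ℤ}

noncomputable def vcomp (W : Matrix (Fin m) (Fin n) ℤ) (δ : Fin r → Fin m → ℤ) (d : Fin m → ℤ)
    (u : Fin r → MvPolynomial (Fin n) K) : Fin r → MvPolynomial (Fin n) K :=
  fun i => whcW W (d - δ i) (u i)

variable {δ : Fin r → Fin m → ℤ}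

lemma vcomp_add (d : Fin m → ℤ) (u u' : Fin r → MvPolynomial (Fin n) K) :
    vcomp W δ d (u + u') = vcomp W δ d u + vcomp W δ d u' := by
  funext i
  simp [vcomp, map_add]

lemma vcomp_sum {ι : Type*} (s : Finset ι) (f : ι → (Fin r → MvPolynomial (Fin n) K))
    (d : Fin m → ℤ) : vcomp W δ d (∑ k ∈ s, f k) = ∑ k ∈ s, vcomp W δ d (f k) := by
  funext i
  simp only [vcomp, Finset.sum_apply, map_sum]

lemma isWHomogeneousVec_vcomp (d : Fin m → ℤ) (u : Fin r → MvPolynomial (Fin n) K) :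
    IsWHomogeneousVec W δ (vcomp W δ d u) d :=
  fun i => isWHomogeneous_whcW (d - δ i) (u i)

lemma vcomp_eq_self {u : Fin r → MvPolynomial (Fin n) K} {d : Fin m → ℤ}
    (hu : IsWHomogeneousVec W δ u d) : vcomp W δ d u = u := by
  funext i
  exact whcW_eq_self (hu i)

lemma vcomp_smul_homog {u : Fin r → MvPolynomial (Fin n) K} {e : Fin m → ℤ}
    (hu : IsWHomogeneousVec W δ u e) (p : MvPolynomial (Fin n) K) (d : Fin m → ℤ) :
    vcomp W δ d (p • u) = (whcW W (d - e) p) • u := by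
  funext i
  show whcW W (d - δ i) (p * u i) = whcW W (d - e) p * u i
  rw [whcW_mul_homog (hu i), sub_sub_sub_cancel_right]

lemma isWHomogeneous_X (j : Fin n) :
    IsWHomogeneous W (X j : MvPolynomial (Fin n) K) (wcol W j) := by
  intro α hα
  rw [support_X, Finset.mem_singleton] at hα
  subst hα
  funext i
  simp [wdeg, wcol, Finsupp.single_apply]

lemma vcomp_X_smul (j : Fin n) (y : Fin r → MvPolynomial (Fin n) K) (d : Fin m → ℤ) :
    vcomp W δ d ((X j : MvPolynomial (Fin n) K) • y)
      = (X j : MvPolynomial (Fin n) K) • vcomp W δ (d - wcol W j) y := by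
  funext i
  show whcW W (d - δ i) (X j * y i) = X j * whcW W (d - wcol W j - δ i) (y i)
  rw [mul_comm (X j) (y i), whcW_mul_homog (isWHomogeneous_X j), sub_right_comm, mul_comm]

lemma isWHomogeneousVec_add {u u' : Fin r → MvPolynomial (Fin n) K} {d : Fin m → ℤ}
    (hu : IsWHomogeneousVec W δ u d) (hu' : IsWHomogeneousVec W δ u' d) :
    IsWHomogeneousVec W δ (u + u') d := by
  intro i α hα
  rcases Finset.mem_union.mp (MvPolynomial.support_add (Pi.add_apply u u' i ▸ hα)) with h | h
  · exact hu i α h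
  · exact hu' i α h

lemma isWHomogeneousVec_zero (d : Fin m → ℤ) :
    IsWHomogeneousVec W δ (0 : Fin r → MvPolynomial (Fin n) K) d := by
  intro i α hα
  simp at hα

lemma vcomp_mem_span {t : ℕ} {g : Fin t → Fin r → MvPolynomial (Fin n) K}
    {dg : Fin t → Fin m → ℤ} (hg : ∀ k, IsWHomogeneousVec W δ (g k) (dg k))
    {u : Fin r → MvPolynomial (Fin n) K}
    (hu : u ∈ Submodule.span (MvPolynomial (Fin n) K) (Set.range g)) (d : Fin m → ℤ) :
    vcomp W δ d u ∈ Submodule.span (MvPolynomial (Fin n) K) (Set.range g) := by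
  obtain ⟨c, rfl⟩ := (Submodule.mem_span_range_iff_exists_fun _).mp hu
  rw [vcomp_sum]
  refine Submodule.sum_mem _ fun k _ => ?_
  rw [vcomp_smul_homog (hg k)]
  exact Submodule.smul_mem _ _ (Submodule.subset_span (Set.mem_range_self k))

end Aux3


/-- Graded Nakayama lemma: for a weakly positive grading, homogeneous vectors `v_1,…,v_s`
of a finitely generated graded submodule `M ⊆ P^r` generate `M` if and only if
`M ⊆ Span_P(v_1,…,v_s) + 𝔪·M`, where `𝔪 = (x_1,…,x_n)`. -/
theorem stmt_2 {K : Type*} [Field K] {m n r : ℕ} (W : Matrix (Fin m) (Fin n) ℤ)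
    (hW : ∃ a : Fin m → ℤ, ∀ j : Fin n, 0 < ∑ i, a i * W i j)
    (δ : Fin r → Fin m → ℤ)
    (M : Submodule (MvPolynomial (Fin n) K) (Fin r → MvPolynomial (Fin n) K))
    (hM : ∃ (t : ℕ) (g : Fin t → (Fin r → MvPolynomial (Fin n) K)) (dg : Fin t → Fin m → ℤ),
      (∀ k, IsWHomogeneousVec W δ (g k) (dg k)) ∧
      Submodule.span (MvPolynomial (Fin n) K) (Set.range g) = M)
    {s : ℕ} (v : Fin s → (Fin r → MvPolynomial (Fin n) K)) (dv : Fin s → Fin m → ℤ)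
    (hv : ∀ k, IsWHomogeneousVec W δ (v k) (dv k)) (hvM : ∀ k, v k ∈ M) :
    Submodule.span (MvPolynomial (Fin n) K) (Set.range v) = M ↔
      M ≤ Submodule.span (MvPolynomial (Fin n) K) (Set.range v) ⊔
        (Ideal.span (Set.range (X : Fin n → MvPolynomial (Fin n) K))) • M := by
  classical
  obtain ⟨a, ha⟩ := hW
  obtain ⟨t, g, dg, hg, hgM⟩ := hM
  set N := Submodule.span (MvPolynomial (Fin n) K) (Set.range v) with hN
  constructor
  · intro hEq
    rw [← hEq]
    exact le_sup_left
  · intro h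
    have hNM : N ≤ M := Submodule.span_le.mpr (by rintro _ ⟨k, rfl⟩; exact hvM k)
    refine le_antisymm hNM ?_
    rcases Nat.eq_zero_or_pos t with ht | ht
    · subst ht
      rw [← hgM, Set.range_eq_empty, Submodule.span_empty]
      exact bot_le
    haveI hne : Nonempty (Fin t) := Fin.pos_iff_nonempty.mp ht
    set pa : (Fin m → ℤ) → ℤ := fun d => ∑ i, a i * d i with hpa
    set B : ℤ := Finset.univ.inf' Finset.univ_nonempty (fun k => pa (dg k)) with hB
    have pa_sub : ∀ d e : Fin m → ℤ, pa (d - e) = pa d - pa e := by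
      intro d e
      simp [hpa, Pi.sub_apply, mul_sub, Finset.sum_sub_distrib]
    have pa_nonneg : ∀ α : Fin n →₀ ℕ, 0 ≤ pa (wdeg W α) := by
      intro α
      have hcalc : pa (wdeg W α) = ∑ j, (α j : ℤ) * ∑ i, a i * W i j := by
        simp only [hpa, wdeg, Finset.mul_sum]
        rw [Finset.sum_comm]
        refine Finset.sum_congr rfl fun j _ => ?_
        exact Finset.sum_congr rfl fun i _ => by ring
      rw [hcalc]
      exact Finset.sum_nonneg fun j _ => mul_nonneg (Int.natCast_nonneg _) (le_of_lt (ha j))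
    have pa_col : ∀ j, 0 < pa (wcol W j) := by
      intro j
      simpa [hpa, wcol] using ha j
    have hB_le : ∀ k, B ≤ pa (dg k) := fun k => Finset.inf'_le _ (Finset.mem_univ k)
    have vanish : ∀ d : Fin m → ℤ, pa d < B → ∀ u ∈ M, IsWHomogeneousVec W δ u d → u = 0 := by
      intro d hd u huM hu
      rw [← hgM] at huM
      obtain ⟨c, rfl⟩ := (Submodule.mem_span_range_iff_exists_fun _).mp huM
      rw [← vcomp_eq_self hu, vcomp_sum]
      refine Finset.sum_eq_zero fun k _ => ?_
      rw [vcomp_smul_homog (hg k)]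
      have hzero : whcW W (d - dg k) (c k) = 0 := by
        ext α
        rw [coeff_whcW]
        split_ifs with hα
        · exfalso
          have h1 : 0 ≤ pa (wdeg W α) := pa_nonneg α
          rw [hα, pa_sub] at h1
          have h2 := hB_le k
          omega
        · simp
      rw [hzero, zero_smul]
    have vmem : ∀ u ∈ M, ∀ d, vcomp W δ d u ∈ M := by
      intro u huM d
      rw [← hgM] at huM ⊢
      exact vcomp_mem_span hg huM d
    have decomp : ∀ z ∈ (Ideal.span (Set.range (X : Fin n → MvPolynomial (Fin n) K))) • M,
        ∀ d : Fin m → ℤ, ∃ ζ : Fin n → (Fin r → MvPolynomial (Fin n) K),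
          (∀ j, ζ j ∈ M) ∧ (∀ j, IsWHomogeneousVec W δ (ζ j) (d - wcol W j)) ∧
          vcomp W δ d z = ∑ j, (X j : MvPolynomial (Fin n) K) • ζ j := by
      intro z hz
      refine Submodule.smul_induction_on hz ?_ ?_
      · intro p hp x hx d
        obtain ⟨q, hq⟩ := (Submodule.mem_span_range_iff_exists_fun _).mp hp
        have hpx : p • x = ∑ j, (X j : MvPolynomial (Fin n) K) • ((q j) • x) := by
          rw [← hq, Finset.sum_smul]
          refine Finset.sum_congr rfl fun j _ => ?_
          rw [smul_eq_mul, mul_comm, mul_smul]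
        refine ⟨fun j => vcomp W δ (d - wcol W j) ((q j) • x),
          fun j => vmem _ (Submodule.smul_mem _ _ hx) _,
          fun j => isWHomogeneousVec_vcomp _ _, ?_⟩
        rw [hpx, vcomp_sum]
        exact Finset.sum_congr rfl fun j _ => vcomp_X_smul j _ d
      · intro z1 z2 h1 h2 d
        obtain ⟨ζ1, hm1, hh1, he1⟩ := h1 d
        obtain ⟨ζ2, hm2, hh2, he2⟩ := h2 d
        refine ⟨ζ1 + ζ2, fun j => Submodule.add_mem _ (hm1 j) (hm2 j),
          fun j => isWHomogeneousVec_add (hh1 j) (hh2 j), ?_⟩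
        rw [vcomp_add, he1, he2, ← Finset.sum_add_distrib]
        exact Finset.sum_congr rfl fun j _ => (smul_add _ _ _).symm
    have main : ∀ c : ℕ, ∀ d : Fin m → ℤ, (pa d - B).toNat = c →
        ∀ u ∈ M, IsWHomogeneousVec W δ u d → u ∈ N := by
      intro c
      induction c using Nat.strong_induction_on with
      | _ c ih =>
        intro d hd u huM hu
        obtain ⟨y, hy, z, hz, hyz⟩ := Submodule.mem_sup.mp (h huM)
        obtain ⟨ζ, hζM, hζh, hζ⟩ := decomp z hz d
        have hyN : vcomp W δ d y ∈ N := vcomp_mem_span hv hy d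
        have hu2 : u = vcomp W δ d y + ∑ j, (X j : MvPolynomial (Fin n) K) • ζ j := by
          rw [← hζ, ← vcomp_add, hyz, vcomp_eq_self hu]
        rw [hu2]
        refine Submodule.add_mem _ hyN (Submodule.sum_mem _ fun j _ => ?_)
        by_cases hj : pa (d - wcol W j) < B
        · rw [vanish _ hj _ (hζM j) (hζh j), smul_zero]
          exact Submodule.zero_mem _
        · push_neg at hj
          have h1 : pa (d - wcol W j) < pa d := by
            rw [pa_sub]
            have := pa_col j
            omega
          have hlt : (pa (d - wcol W j) - B).toNat < c := by
            subst hd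
            rw [Int.toNat_lt_toNat] <;> omega
          exact Submodule.smul_mem _ _ (ih _ hlt _ rfl _ (hζM j) (hζh j))
    rw [← hgM]
    refine Submodule.span_le.mpr ?_
    rintro _ ⟨k, rfl⟩
    exact main _ _ rfl (g k) (hgM ▸ Submodule.subset_span (Set.mem_range_self k)) (hg k)
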